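/- arXiv:2107.03112 — 4 statements merged into one kernel-verified Lean document; each statement's English description precedes it below -/
import Mathlib

section
/- Let A be a real positive-definite matrix indexed by α ⊕ β with block decomposition A = fromBlocks A₁₁ A₁₂ A₂₁ A₂₂. Then for every real matrix F indexed by (α ⊕ β) × γ, writing F₁ and F₂ for its α-row block and β-row block respectively, and writing C = A⁻¹ * F (so C₁ is the α-row block of C), one has F₁ − A₁₂ * A₂₂⁻¹ * F₂ = ((A⁻¹)₁₁)⁻¹ * C₁, where (A⁻¹)₁₁ denotes the α × α block of A⁻¹. (This is the matrix-valued extended Rippa identity used in the proof of Theorem 3.1: the leave-α-out residual of each column of F equals the corresponding column of ((A⁻¹)₁₁)⁻¹ applied to the α-block of the coefficients A⁻¹F.) -/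
open Matrix

lemma posDef_toBlocks₂₂ {α β : Type*} [Fintype α] [Fintype β]
    {A : Matrix (α ⊕ β) (α ⊕ β) ℝ} (hA : A.PosDef) : (A.toBlocks₂₂).PosDef := by
  refine Matrix.posDef_iff_dotProduct_mulVec.mpr ⟨hA.1.submatrix _, fun x hx => ?_⟩
  have hy : (Sum.elim 0 x : α ⊕ β → ℝ) ≠ 0 := by
    intro h
    apply hx
    funext i
    exact congrFun h (Sum.inr i)
  have := hA.dotProduct_mulVec_pos hy
  convert this using 1
  simp [dotProduct, Matrix.mulVec, Fintype.sum_sum_type, Matrix.toBlocks₂₂,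
    dotProduct]

/-- Matrix-valued extended Rippa identity: for a positive definite block matrix
`A = fromBlocks A₁₁ A₁₂ A₂₁ A₂₂` and any matrix `F` of data columns, the leave-α-out
residual `F₁ - A₁₂ A₂₂⁻¹ F₂` equals `((A⁻¹)₁₁)⁻¹ C₁` where `C = A⁻¹ F`. -/
theorem erba_matrix_extended_rippa {α β γ : Type*} [Fintype α] [Fintype β] [Fintype γ]
    [DecidableEq α] [DecidableEq β] [DecidableEq γ]
    (A : Matrix (α ⊕ β) (α ⊕ β) ℝ)
    (A₁₁ : Matrix α α ℝ) (A₁₂ : Matrix α β ℝ) (A₂₁ : Matrix β α ℝ) (A₂₂ : Matrix β β ℝ)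
    (hA : A.PosDef) (hblocks : A = Matrix.fromBlocks A₁₁ A₁₂ A₂₁ A₂₂)
    (F : Matrix (α ⊕ β) γ ℝ)
    (F₁ : Matrix α γ ℝ) (hF₁ : F₁ = F.submatrix Sum.inl id)
    (F₂ : Matrix β γ ℝ) (hF₂ : F₂ = F.submatrix Sum.inr id)
    (C : Matrix (α ⊕ β) γ ℝ) (hC : C = A⁻¹ * F)
    (C₁ : Matrix α γ ℝ) (hC₁ : C₁ = C.submatrix Sum.inl id) :
    F₁ - A₁₂ * A₂₂⁻¹ * F₂ = ((A⁻¹).toBlocks₁₁)⁻¹ * C₁ := by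
  have hAdet : IsUnit A.det := isUnit_iff_ne_zero.mpr hA.det_pos.ne'
  have hA22 : A₂₂.PosDef := by
    have := posDef_toBlocks₂₂ hA
    rwa [hblocks, Matrix.toBlocks_fromBlocks₂₂] at this
  have hA22det : IsUnit A₂₂.det := isUnit_iff_ne_zero.mpr hA22.det_pos.ne'
  have hA22r : A₂₂ * A₂₂⁻¹ = 1 := Matrix.mul_nonsing_inv _ hA22det
  have hA22l : A₂₂⁻¹ * A₂₂ = 1 := Matrix.nonsing_inv_mul _ hA22det
  set B₁₁ := (A⁻¹).toBlocks₁₁ with hB11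
  set B₁₂ := (A⁻¹).toBlocks₁₂ with hB12
  set B₂₁ := (A⁻¹).toBlocks₂₁ with hB21
  set B₂₂ := (A⁻¹).toBlocks₂₂ with hB22
  have hBA : A⁻¹ * A = 1 := Matrix.nonsing_inv_mul _ hAdet
  have hBblocks : A⁻¹ = Matrix.fromBlocks B₁₁ B₁₂ B₂₁ B₂₂ := (Matrix.fromBlocks_toBlocks _).symm
  rw [hBblocks, hblocks, Matrix.fromBlocks_multiply, ← Matrix.fromBlocks_one,
    Matrix.fromBlocks_inj] at hBA
  obtain ⟨h11, h12, -, -⟩ := hBA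
  have h12' := congrArg (· * A₂₂⁻¹) h12
  simp only [Matrix.add_mul, Matrix.zero_mul, Matrix.mul_assoc, hA22r, Matrix.mul_one] at h12'
  have hB12eq : B₁₂ = -(B₁₁ * (A₁₂ * A₂₂⁻¹)) := by
    rw [add_comm] at h12'
    exact add_eq_zero_iff_eq_neg.mp h12'
  have hS : B₁₁ * (A₁₁ - A₁₂ * A₂₂⁻¹ * A₂₁) = 1 := by
    have hkey : B₁₁ * (A₁₂ * A₂₂⁻¹ * A₂₁) = -(B₁₂ * A₂₁) := by
      simp [hB12eq, Matrix.neg_mul, Matrix.mul_assoc]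
    rw [Matrix.mul_sub, hkey, sub_neg_eq_add, h11]
  have hBinv : B₁₁⁻¹ = A₁₁ - A₁₂ * A₂₂⁻¹ * A₂₁ := Matrix.inv_eq_right_inv hS
  have hF : F = A * C := by
    rw [hC, ← Matrix.mul_assoc, Matrix.mul_nonsing_inv _ hAdet, Matrix.one_mul]
  have hF1 : F₁ = A₁₁ * C₁ + A₁₂ * (C.submatrix Sum.inr id) := by
    subst hF₁ hC₁
    ext i j
    simp [hF, hblocks, Matrix.mul_apply, Fintype.sum_sum_type, Matrix.fromBlocks]
  have hF2 : F₂ = A₂₁ * C₁ + A₂₂ * (C.submatrix Sum.inr id) := by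
    subst hF₂ hC₁
    ext i j
    simp [hF, hblocks, Matrix.mul_apply, Fintype.sum_sum_type, Matrix.fromBlocks]
  have hcancel : A₁₂ * A₂₂⁻¹ * (A₂₂ * (C.submatrix Sum.inr id)) = A₁₂ * (C.submatrix Sum.inr id) := by
    rw [Matrix.mul_assoc A₁₂, ← Matrix.mul_assoc A₂₂⁻¹, hA22l, Matrix.one_mul]
  rw [hBinv, hF1, hF2, Matrix.mul_add, hcancel, ← Matrix.mul_assoc, Matrix.sub_mul]
  abel
end

section
/- Let A be a real positive-definite matrix indexed by α ⊕ β with block decomposition A = fromBlocks A₁₁ A₁₂ A₂₁ A₂₂. For every vector f : (α ⊕ β) → ℝ with blocks f₁ : α → ℝ and f₂ : β → ℝ, let c = A⁻¹ ⬝ f with α-block c₁. Then the residual vector of the interpolant built on the β-nodes and evaluated at the α-nodes satisfies f₁ − A₁₂ ⬝ (A₂₂⁻¹ ⬝ f₂) = ((A⁻¹)₁₁)⁻¹ ⬝ c₁. (Extended Rippa's algorithm identity, equation (8) of the paper: the leave-V-out residual e_p = f_p − (c^(p))ᵀ k^p(V) equals ((A⁻¹)_{p,p})⁻¹ c_p.)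 -/
open Matrix

lemma posDef_blocks₂₂ {α β : Type*} [Fintype α] [Fintype β]
    {A₁₁ : Matrix α α ℝ} {A₁₂ : Matrix α β ℝ} {A₂₁ : Matrix β α ℝ} {A₂₂ : Matrix β β ℝ}
    (hA : (Matrix.fromBlocks A₁₁ A₁₂ A₂₁ A₂₂).PosDef) : A₂₂.PosDef := by
  constructor
  · have h := hA.1
    rw [Matrix.IsHermitian] at h ⊢
    have := congrArg Matrix.toBlocks₂₂ h
    simpa [Matrix.fromBlocks_transpose] using this
  · exact (hA.submatrix Sum.inr_injective).2

lemma posDef_blocks₁₁ {α β : Type*} [Fintype α] [Fintype β]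
    {A₁₁ : Matrix α α ℝ} {A₁₂ : Matrix α β ℝ} {A₂₁ : Matrix β α ℝ} {A₂₂ : Matrix β β ℝ}
    (hA : (Matrix.fromBlocks A₁₁ A₁₂ A₂₁ A₂₂).PosDef) : A₁₁.PosDef := by
  constructor
  · have h := hA.1
    rw [Matrix.IsHermitian] at h ⊢
    have := congrArg Matrix.toBlocks₁₁ h
    simpa [Matrix.fromBlocks_transpose] using this
  · exact (hA.submatrix Sum.inl_injective).2

/-- Extended Rippa's algorithm identity (eq. (8) of the paper): for a positive definite
block matrix `A = fromBlocks A₁₁ A₁₂ A₂₁ A₂₂` and data vector `f`, the leave-V-out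
residual `f₁ - A₁₂ A₂₂⁻¹ f₂` equals `((A⁻¹)₁₁)⁻¹ c₁` where `c = A⁻¹ f`. -/
theorem erba_extended_rippa {α β : Type*} [Fintype α] [Fintype β]
    [DecidableEq α] [DecidableEq β]
    (A : Matrix (α ⊕ β) (α ⊕ β) ℝ)
    (A₁₁ : Matrix α α ℝ) (A₁₂ : Matrix α β ℝ) (A₂₁ : Matrix β α ℝ) (A₂₂ : Matrix β β ℝ)
    (hA : A.PosDef) (hblocks : A = Matrix.fromBlocks A₁₁ A₁₂ A₂₁ A₂₂)
    (f : (α ⊕ β) → ℝ)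
    (f₁ : α → ℝ) (hf₁ : f₁ = f ∘ Sum.inl)
    (f₂ : β → ℝ) (hf₂ : f₂ = f ∘ Sum.inr)
    (c : (α ⊕ β) → ℝ) (hc : c = A⁻¹ *ᵥ f)
    (c₁ : α → ℝ) (hc₁ : c₁ = c ∘ Sum.inl) :
    f₁ - A₁₂ *ᵥ (A₂₂⁻¹ *ᵥ f₂) = ((A⁻¹).toBlocks₁₁)⁻¹ *ᵥ c₁ := by
  have hA22 : A₂₂.PosDef := posDef_blocks₂₂ (hblocks ▸ hA)
  have hAinv : (A⁻¹).PosDef := hA.inv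
  set B := A⁻¹ with hB
  set B₁₁ := B.toBlocks₁₁ with hB11
  set B₁₂ := B.toBlocks₁₂ with hB12
  have hBblocks : B = Matrix.fromBlocks B₁₁ B₁₂ B.toBlocks₂₁ B.toBlocks₂₂ :=
    (Matrix.fromBlocks_toBlocks B).symm
  have hB11pd : B₁₁.PosDef := posDef_blocks₁₁ (hBblocks ▸ hAinv)
  -- B * A = 1
  have hBA : B * A = 1 := Matrix.nonsing_inv_mul A hA.det_pos.ne'.isUnit
  -- block (1,2) of B * A : B₁₁ * A₁₂ + B₁₂ * A₂₂ = 0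
  have h12 : B₁₁ * A₁₂ + B₁₂ * A₂₂ = 0 := by
    have h := hBA
    rw [hBblocks, hblocks, Matrix.fromBlocks_multiply, ← Matrix.fromBlocks_one] at h
    have := congrArg Matrix.toBlocks₁₂ h
    simpa [-Matrix.fromBlocks_one] using this
  have hB12eq : B₁₂ = -(B₁₁ * A₁₂ * A₂₂⁻¹) := by
    have h := congrArg (· * A₂₂⁻¹) h12
    simp only [Matrix.add_mul, Matrix.zero_mul] at h
    rw [Matrix.mul_assoc B₁₂, Matrix.mul_nonsing_inv _ hA22.det_pos.ne'.isUnit, Matrix.mul_one] at h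
    linear_combination (norm := noncomm_ring) h
  -- c₁ = B₁₁ *ᵥ f₁ + B₁₂ *ᵥ f₂
  have hc₁eq : c₁ = B₁₁ *ᵥ f₁ + B₁₂ *ᵥ f₂ := by
    funext i
    have : c = Matrix.fromBlocks B₁₁ B₁₂ B.toBlocks₂₁ B.toBlocks₂₂ *ᵥ f := by
      conv_lhs => rw [hc, hBblocks]
    rw [hc₁, hf₁, hf₂]
    have h := congrFun this (Sum.inl i)
    rw [← Sum.elim_comp_inl_inr f, Matrix.fromBlocks_mulVec] at h
    simpa using h
  -- key: B₁₁ *ᵥ (f₁ - A₁₂ *ᵥ (A₂₂⁻¹ *ᵥ f₂)) = c₁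
  have key : B₁₁ *ᵥ (f₁ - A₁₂ *ᵥ (A₂₂⁻¹ *ᵥ f₂)) = c₁ := by
    rw [hc₁eq, hB12eq]
    rw [Matrix.mulVec_sub]
    simp only [Matrix.mulVec_mulVec, Matrix.neg_mulVec, Matrix.mul_assoc]
    abel
  rw [← key, Matrix.mulVec_mulVec _ B₁₁⁻¹ B₁₁,
    Matrix.nonsing_inv_mul _ hB11pd.det_pos.ne'.isUnit, Matrix.one_mulVec]
end

section
/- Let A be a real positive-definite matrix indexed by α ⊕ β with block decomposition A = fromBlocks A₁₁ A₁₂ A₂₁ A₂₂. Let B : Matrix α (α ⊕ β) ℝ be the α-row block of A⁻¹ (i.e. B has entries (A⁻¹)_{Sum.inl i, j}), and let K : Matrix (α ⊕ β) α ℝ be the matrix of α-columns of A (i.e. K has entries A_{j, Sum.inl i}). Then for every i : α, the i-th diagonal entry of A₁₁ − A₁₂ * A₂₂⁻¹ * A₂₁ equals the i-th row sum of the Hadamard product (((A⁻¹)₁₁)⁻¹ * B) ⊙ Kᵀ, that is, (A₁₁ − A₁₂A₂₂⁻¹A₂₁)_{i,i} = ∑_{j : α ⊕ β} (((A⁻¹)₁₁)⁻¹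 * B)_{i,j} · K_{j,i}. (Theorem 3.1 of the paper: the squared power function vector (P^V)² = diag(k_p(V) − k^p(V)ᵀ(A^{p,p})⁻¹k^p(V)) can be computed as sum(((A⁻¹_{p,p})⁻¹ A⁻¹_{p,:}) ⊙ k(V)ᵀ).) -/
open Matrix

/-- Theorem 3.1 of the paper: the squared power function values, i.e. the diagonal
entries of the Schur complement `A₁₁ - A₁₂ A₂₂⁻¹ A₂₁`, can be computed as the row sums
of the Hadamard product `(((A⁻¹)₁₁)⁻¹ * (A⁻¹)_{p,:}) ⊙ k(V)ᵀ`. -/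
theorem erba_power_function_formula {α β : Type*} [Fintype α] [Fintype β]
    [DecidableEq α] [DecidableEq β]
    (A : Matrix (α ⊕ β) (α ⊕ β) ℝ)
    (A₁₁ : Matrix α α ℝ) (A₁₂ : Matrix α β ℝ) (A₂₁ : Matrix β α ℝ) (A₂₂ : Matrix β β ℝ)
    (hA : A.PosDef) (hblocks : A = Matrix.fromBlocks A₁₁ A₁₂ A₂₁ A₂₂)
    (B : Matrix α (α ⊕ β) ℝ) (hB : ∀ i j, B i j = A⁻¹ (Sum.inl i) j)
    (K : Matrix (α ⊕ β) α ℝ) (hK : ∀ j i, K j i = A j (Sum.inl i)) :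
    ∀ i : α, (A₁₁ - A₁₂ * A₂₂⁻¹ * A₂₁) i i =
      ∑ j : α ⊕ β, (((A⁻¹).toBlocks₁₁)⁻¹ * B) i j * K j i := by
  intro i
  -- A₂₂ is positive definite
  have h22 : A₂₂.PosDef := by
    refine Matrix.PosDef.of_dotProduct_mulVec_pos ?_ ?_
    · ext j k
      have := congrFun (congrFun hA.1 (Sum.inr j)) (Sum.inr k)
      simpa [hblocks, Matrix.conjTranspose_apply] using this
    · intro x hx
      have hx' : (Sum.elim (0 : α → ℝ) x : α ⊕ β → ℝ) ≠ 0 := by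
        intro h
        apply hx
        funext j
        exact congrFun h (Sum.inr j)
      have := hA.dotProduct_mulVec_pos hx'
      simpa [hblocks, dotProduct, Matrix.mulVec, Fintype.sum_sum_type,
        Matrix.fromBlocks] using this
  haveI : Invertible A₂₂ := h22.isUnit.invertible
  haveI : Invertible A := hA.isUnit.invertible
  haveI hAb : Invertible (Matrix.fromBlocks A₁₁ A₁₂ A₂₁ A₂₂) := hblocks ▸ ‹Invertible A›
  haveI hS : Invertible (A₁₁ - A₁₂ * ⅟A₂₂ * A₂₁) :=
    Matrix.invertibleOfFromBlocks₂₂Invertible A₁₁ A₁₂ A₂₁ A₂₂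
  have hSinv : (⅟A₂₂ : Matrix β β ℝ) = A₂₂⁻¹ := Matrix.invOf_eq_nonsing_inv A₂₂
  set S : Matrix α α ℝ := A₁₁ - A₁₂ * A₂₂⁻¹ * A₂₁ with hSdef
  haveI hS' : Invertible S := by rwa [hSinv] at hS
  -- the top-left block of A⁻¹ is S⁻¹
  have hblk : (A⁻¹).toBlocks₁₁ = S⁻¹ := by
    have h1 : A⁻¹ = ⅟(Matrix.fromBlocks A₁₁ A₁₂ A₂₁ A₂₂) := by
      rw [Matrix.invOf_eq_nonsing_inv, hblocks]
    rw [h1, Matrix.invOf_fromBlocks₂₂_eq, Matrix.toBlocks_fromBlocks₁₁,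
      Matrix.invOf_eq_nonsing_inv, hSinv]
  have hSS : ((A⁻¹).toBlocks₁₁)⁻¹ = S :=
    hblk ▸ Matrix.nonsing_inv_nonsing_inv S (Matrix.isUnit_det_of_invertible S)
  have hBK : ∀ k, ∑ j, B k j * K j i = if k = i then 1 else 0 := by
    intro k
    have := congrFun (congrFun (Matrix.nonsing_inv_mul A (Matrix.isUnit_det_of_invertible A)) (Sum.inl k)) (Sum.inl i)
    simpa [Matrix.mul_apply, hB, hK, Matrix.one_apply, Sum.inl.injEq] using this
  rw [hSS]
  symm
  calc ∑ j, (S * B) i j * K j i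
      = ∑ k, S i k * ∑ j, B k j * K j i := by
        simp_rw [Matrix.mul_apply, Finset.sum_mul, mul_assoc, Finset.mul_sum]
        exact Finset.sum_comm
    _ = S i i := by simp [hBK]
end

section
/- Let A be a real positive-definite matrix indexed by α ⊕ β with block decomposition A = fromBlocks A₁₁ A₁₂ A₂₁ A₂₂, and let k : (α ⊕ β) → ℝ be a vector with blocks k₁ : α → ℝ and k₂ : β → ℝ. Then k₁ᵀ ⬝ A₁₁⁻¹ ⬝ k₁ ≤ kᵀ ⬝ A⁻¹ ⬝ k, i.e. the quadratic form of the inverse of a principal submatrix applied to the corresponding subvector is at most the quadratic form of the full inverse. Consequently, for any real number κ₀, one has κ₀ − kᵀ A⁻¹ k ≤ κ₀ − k₁ᵀ A₁₁⁻¹ k₁: the squared power function value at a point does not increase when nodes are added to (equivalently, does not decrease when nodes are removed from) the interpolation set, which is the pointwise monotonicity ‖P_{κ, X_{s-1}}‖_∞ ≤ ‖P_{κ, X_s}‖_∞ for nested node sets X_s ⊂ X_{s-1} that guarantees convergence of the power-based reduced basis scheme. -/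
open Matrix

/-- Monotonicity of the (squared) power function under node removal: for a positive
definite block matrix `A = fromBlocks A₁₁ A₁₂ A₂₁ A₂₂` and any kernel-evaluation
vector `k` with α-block `k₁`, one has `k₁ᵀ A₁₁⁻¹ k₁ ≤ kᵀ A⁻¹ k`, and hence
`κ₀ - kᵀ A⁻¹ k ≤ κ₀ - k₁ᵀ A₁₁⁻¹ k₁` for every `κ₀`. -/
theorem erba_power_function_monotone {α β : Type*} [Fintype α] [Fintype β]
    [DecidableEq α] [DecidableEq β]
    (A : Matrix (α ⊕ β) (α ⊕ β) ℝ)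
    (A₁₁ : Matrix α α ℝ) (A₁₂ : Matrix α β ℝ) (A₂₁ : Matrix β α ℝ) (A₂₂ : Matrix β β ℝ)
    (hA : A.PosDef) (hblocks : A = Matrix.fromBlocks A₁₁ A₁₂ A₂₁ A₂₂)
    (k : (α ⊕ β) → ℝ) (k₁ : α → ℝ) (hk₁ : k₁ = k ∘ Sum.inl) :
    k₁ ⬝ᵥ (A₁₁⁻¹ *ᵥ k₁) ≤ k ⬝ᵥ (A⁻¹ *ᵥ k) ∧
      ∀ κ₀ : ℝ, κ₀ - k ⬝ᵥ (A⁻¹ *ᵥ k) ≤ κ₀ - k₁ ⬝ᵥ (A₁₁⁻¹ *ᵥ k₁) := by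
  -- A₁₁ is positive definite
  have hA11 : A₁₁.PosDef := by
    refine Matrix.PosDef.of_dotProduct_mulVec_pos ?_ ?_
    · have h := hA.isHermitian.submatrix Sum.inl
      have : A.submatrix Sum.inl Sum.inl = A₁₁ := by
        ext i j; simp [hblocks]
      rwa [this] at h
    · intro y hy
      have hy' : Sum.elim y (0 : β → ℝ) ≠ 0 := by
        intro h
        apply hy
        funext i
        have := congrFun h (Sum.inl i)
        simpa using this
      have := hA.dotProduct_mulVec_pos hy'
      rw [hblocks, fromBlocks_mulVec] at this
      simpa [sumElim_dotProduct_sumElim] using this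
  have hAdet : IsUnit A.det := isUnit_iff_ne_zero.mpr hA.det_pos.ne'
  have h11det : IsUnit A₁₁.det := isUnit_iff_ne_zero.mpr hA11.det_pos.ne'
  -- key inequality: 2 k⬝x - x⬝Ax ≤ k⬝A⁻¹k
  have key : ∀ x : (α ⊕ β) → ℝ,
      2 * (k ⬝ᵥ x) - x ⬝ᵥ (A *ᵥ x) ≤ k ⬝ᵥ (A⁻¹ *ᵥ k) := by
    intro x
    have hsym : Aᵀ = A := by
      rw [← Matrix.conjTranspose_eq_transpose_of_trivial, hA.isHermitian.eq]
    have hAy : A *ᵥ (A⁻¹ *ᵥ k) = k := by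
      rw [Matrix.mulVec_mulVec, Matrix.mul_nonsing_inv _ hAdet, Matrix.one_mulVec]
    set y := A⁻¹ *ᵥ k with hy
    have h0 : 0 ≤ (x - y) ⬝ᵥ (A *ᵥ (x - y)) := by
      simpa using hA.posSemidef.dotProduct_mulVec_nonneg (x - y)
    have hxy : x ⬝ᵥ (A *ᵥ y) = y ⬝ᵥ (A *ᵥ x) := by
      rw [Matrix.dotProduct_mulVec, ← Matrix.mulVec_transpose, hsym, dotProduct_comm]
    have hexp : (x - y) ⬝ᵥ (A *ᵥ (x - y)) =
        x ⬝ᵥ (A *ᵥ x) - 2 * (k ⬝ᵥ x) + k ⬝ᵥ (A⁻¹ *ᵥ k) := by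
      have h1 : A *ᵥ (x - y) = A *ᵥ x - A *ᵥ y := by
        simp [Matrix.mulVec_sub]
      rw [h1, sub_dotProduct, dotProduct_sub, dotProduct_sub, hAy]
      have hky : y ⬝ᵥ k = k ⬝ᵥ (A⁻¹ *ᵥ k) := by
        rw [hy, dotProduct_comm]
      have hxk : x ⬝ᵥ k = k ⬝ᵥ x := dotProduct_comm _ _
      have hyAx : y ⬝ᵥ (A *ᵥ x) = k ⬝ᵥ x := by rw [← hxy, hAy, hxk]
      rw [hky, hyAx, hxk]
      ring
    rw [hy] at hexp ⊢
    linarith [h0, hexp.ge, hexp.le]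
  -- choose x = Sum.elim (A₁₁⁻¹ k₁) 0
  set w := A₁₁⁻¹ *ᵥ k₁ with hw
  have hmain : k₁ ⬝ᵥ w ≤ k ⬝ᵥ (A⁻¹ *ᵥ k) := by
    have := key (Sum.elim w 0)
    have hkdec : k = Sum.elim k₁ (k ∘ Sum.inr) := by
      funext i; cases i <;> simp [hk₁]
    rw [hblocks, fromBlocks_mulVec] at this
    rw [hkdec] at this
    simp only [Sum.elim_comp_inl, Sum.elim_comp_inr, Matrix.mulVec_zero, add_zero,
      sumElim_dotProduct_sumElim, zero_dotProduct, dotProduct_zero] at this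
    have hAw : A₁₁ *ᵥ w = k₁ := by
      rw [hw, Matrix.mulVec_mulVec, Matrix.mul_nonsing_inv _ h11det, Matrix.one_mulVec]
    rw [hAw, dotProduct_comm w k₁] at this
    rw [hblocks, hkdec]
    linarith
  exact ⟨hmain, fun κ₀ => by linarith⟩
end
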